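/- arXiv:2507.06604 — 2 statements merged into one kernel-verified Lean document; each statement's English description precedes it below -/
import Mathlib

section
/- Assume s ≠ 0. Then the Schur complement a₁₁ − a₁₂·a₂₂⁻¹·a₂₁ is invertible and the scalar (b₁ − a₁₂·a₂₂⁻¹·b₂)* · (a₁₁ − a₁₂·a₂₂⁻¹·a₂₁)⁻¹ · (b₁ − a₁₂·a₂₂⁻¹·b₂) equals τ₀·(τ − τ₀)/(2τ − τ₀), where τ = ψ₁ψ₂ and τ₀ = |s|². -/
open Matrix
set_option maxHeartbeats 1600000

lemma vmv_mul {n : ℕ} (u w u' w' : Fin n → ℂ) :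
    vecMulVec u w * vecMulVec u' w' = (w ⬝ᵥ u') • vecMulVec u w' := by
  ext i j
  simp only [Matrix.mul_apply, vecMulVec_apply, Matrix.smul_apply, dotProduct, smul_eq_mul,
    Finset.sum_mul]
  exact Finset.sum_congr rfl fun k _ => by ring

lemma vmv_mulVec {n : ℕ} (u w y : Fin n → ℂ) :
    vecMulVec u w *ᵥ y = (w ⬝ᵥ y) • u := by
  funext i
  simp only [Matrix.mulVec, dotProduct, vecMulVec_apply, Pi.smul_apply, smul_eq_mul,
    Finset.sum_mul]
  exact Finset.sum_congr rfl fun k _ => by ring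

theorem stmt_16 (n : ℕ) (hn : 1 ≤ n) (s : ℂ) (hs : s ≠ 0) (z ξ : Fin n → ℂ) :
    let sxz : ℂ := s - ∑ i, ξ i * z i
    let ψ₁r : ℝ := (∑ i, Complex.normSq (z i)) + 1
    let ψ₂r : ℝ := (∑ i, Complex.normSq (ξ i)) + Complex.normSq sxz
    let τr : ℝ := ψ₁r * ψ₂r
    let τ₀r : ℝ := Complex.normSq s
    let ψ₁ : ℂ := (ψ₁r : ℂ)
    let ψ₂ : ℂ := (ψ₂r : ℂ)
    let τ : ℂ := (τr : ℂ)
    let τ₀ : ℂ := (τ₀r : ℂ)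
    let a11 : Matrix (Fin n) (Fin n) ℂ :=
      ψ₂ • 1 - sxz • Matrix.vecMulVec (star z) (star ξ)
        - star sxz • Matrix.vecMulVec ξ z + ψ₁ • Matrix.vecMulVec ξ (star ξ)
    let a12 : Matrix (Fin n) (Fin n) ℂ :=
      ψ₁ • Matrix.vecMulVec ξ (star z) + Matrix.vecMulVec (star z) ξ
        - sxz • Matrix.vecMulVec (star z) (star z)
    let a21 : Matrix (Fin n) (Fin n) ℂ :=
      ψ₁ • Matrix.vecMulVec z (star ξ) + Matrix.vecMulVec (star ξ) z
        - star sxz • Matrix.vecMulVec z z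
    let a22 : Matrix (Fin n) (Fin n) ℂ := ψ₁ • (1 + Matrix.vecMulVec z (star z))
    let A' : Matrix (Fin n ⊕ Fin n) (Fin n ⊕ Fin n) ℂ := Matrix.fromBlocks a11 a12 a21 a22
    let b : Fin n ⊕ Fin n → ℂ :=
      Sum.elim (fun i => ψ₂ * star (z i) - ψ₁ * star sxz * ξ i)
               (fun i => ψ₁ * (star (ξ i) - star sxz * z i))
    let b1 : Fin n → ℂ := fun i => ψ₂ * star (z i) - ψ₁ * star sxz * ξ i
    let b2 : Fin n → ℂ := fun i => ψ₁ * (star (ξ i) - star sxz * z i)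
    let Sc : Matrix (Fin n) (Fin n) ℂ := a11 - a12 * a22⁻¹ * a21
    let v : Fin n → ℂ := b1 - (a12 * a22⁻¹) *ᵥ b2
    IsUnit Sc ∧ star v ⬝ᵥ (Sc⁻¹ *ᵥ v) = τ₀ * (τ - τ₀) / (2 * τ - τ₀) := by
  intro sxz ψ₁r ψ₂r τr τ₀r ψ₁ ψ₂ τ τ₀ a11 a12 a21 a22 A' b b1 b2 Sc v
  have hsxz_def : sxz = s - ∑ i, ξ i * z i := rfl
  set p : ℂ := ∑ i, ξ i * z i with hp
  -- real positivity facts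
  have hψ1r : (0:ℝ) < ψ₁r := by
    have : (0:ℝ) < (∑ i, Complex.normSq (z i)) + 1 :=
      add_pos_of_nonneg_of_pos (Finset.sum_nonneg fun i _ => Complex.normSq_nonneg _) one_pos
    exact this
  have hCS : τ₀r ≤ τr := by
    show Complex.normSq s ≤ ((∑ i, Complex.normSq (z i)) + 1) *
      ((∑ i, Complex.normSq (ξ i)) + Complex.normSq sxz)
    rw [hsxz_def]
    set nzr : ℝ := ∑ i, Complex.normSq (z i) with hnzr
    set nxr : ℝ := ∑ i, Complex.normSq (ξ i) with hnxr
    set A : ℝ := ‖s - ∑ i, ξ i * z i‖ with hA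
    set B : ℝ := ∑ i, ‖ξ i‖ * ‖z i‖ with hB
    have hA0 : 0 ≤ A := norm_nonneg _
    have hB0 : 0 ≤ B := Finset.sum_nonneg fun i _ => by positivity
    have hS : ‖s‖ ≤ A + B := by
      calc ‖s‖ = ‖(s - ∑ i, ξ i * z i) + ∑ i, ξ i * z i‖ := by ring_nf
      _ ≤ A + ‖∑ i, ξ i * z i‖ := norm_add_le _ _
      _ ≤ A + B := by
          gcongr
          calc ‖∑ i, ξ i * z i‖ ≤ ∑ i, ‖ξ i * z i‖ :=
                norm_sum_le _ _
          _ = B := by simp [hB, norm_mul]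
    have hB2 : B ^ 2 ≤ nxr * nzr := by
      have := Finset.sum_mul_sq_le_sq_mul_sq Finset.univ (fun i => ‖ξ i‖)
        (fun i => ‖z i‖)
      simp only [hnzr, hnxr, hB, ← Complex.sq_norm]
      exact this
    have hkey : 2 * A * B ≤ nxr + A ^ 2 * nzr := by
      have hnx0 : 0 ≤ nxr := by
        rw [hnxr]; exact Finset.sum_nonneg fun i _ => Complex.normSq_nonneg _
      have hnz0 : 0 ≤ nzr := by
        rw [hnzr]; exact Finset.sum_nonneg fun i _ => Complex.normSq_nonneg _
      have hX0 : 0 ≤ nxr + A ^ 2 * nzr := add_nonneg hnx0 (mul_nonneg (sq_nonneg A) hnz0)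
      have h1 : (2 * A * B) ^ 2 ≤ (nxr + A ^ 2 * nzr) ^ 2 := by
        nlinarith [mul_le_mul_of_nonneg_left hB2 (sq_nonneg A), sq_nonneg (nxr - A ^ 2 * nzr)]
      have h2 : 0 ≤ 2 * A * B := mul_nonneg (by linarith) hB0
      nlinarith [h1, hX0, h2]
    have hnormA : Complex.normSq (s - ∑ i, ξ i * z i) = A ^ 2 := by
      rw [hA, Complex.sq_norm]
    have hnormS : Complex.normSq s = ‖s‖ ^ 2 := (Complex.sq_norm s).symm
    rw [hnormA, hnormS]
    have hS0 : 0 ≤ ‖s‖ := norm_nonneg s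
    nlinarith [hS, hB2, hkey, mul_nonneg hA0 hB0, sq_nonneg (A + B)]
  have hτ₀r : (0:ℝ) < τ₀r := Complex.normSq_pos.mpr hs
  have hτr : (0:ℝ) < τr := lt_of_lt_of_le hτ₀r hCS
  have hψ₂r : (0:ℝ) < ψ₂r := by
    have hτdef : τr = ψ₁r * ψ₂r := rfl
    nlinarith [hτr, hψ1r]
  have hdr : (0:ℝ) < 2 * τr - τ₀r := by linarith
  -- complex scalar relations
  have hψ₁c : ψ₁ ≠ 0 := Complex.ofReal_ne_zero.mpr (ne_of_gt hψ1r)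
  have hψ₂c : ψ₂ ≠ 0 := Complex.ofReal_ne_zero.mpr (ne_of_gt hψ₂r)
  have hτe : τ = ψ₁ * ψ₂ := by
    show ((ψ₁r * ψ₂r : ℝ) : ℂ) = (ψ₁r : ℂ) * (ψ₂r : ℂ)
    push_cast; ring
  have hτ₀e : τ₀ = s * star s := by
    show ((Complex.normSq s : ℝ) : ℂ) = s * star s
    rw [← Complex.mul_conj]; rfl
  have hdc : 2 * (ψ₁ * ψ₂) - s * star s ≠ 0 := by
    rw [← hτe, ← hτ₀e]
    have : 2 * τ - τ₀ = ((2 * τr - τ₀r : ℝ) : ℂ) := by push_cast; rfl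
    rw [this]
    exact Complex.ofReal_ne_zero.mpr (ne_of_gt hdr)
  have hsx : sxz = s - p := rfl
  have hsxs : star sxz = star s - star p := by rw [hsx, star_sub]
  -- dot product lemmas
  have hzz : star z ⬝ᵥ z = ψ₁ - 1 := by
    have h1 : star z ⬝ᵥ z = ((∑ i, Complex.normSq (z i) : ℝ) : ℂ) := by
      simp only [dotProduct, Pi.star_apply, Complex.star_def,
        ← Complex.normSq_eq_conj_mul_self]
      push_cast; rfl
    have h2 : ψ₁ = ((∑ i, Complex.normSq (z i) : ℝ) : ℂ) + 1 := by
      show ((_ + 1 : ℝ) : ℂ) = _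
      push_cast; ring
    rw [h1, h2]; ring
  have hzz' : z ⬝ᵥ star z = ψ₁ - 1 := by rw [dotProduct_comm]; exact hzz
  have hxx : star ξ ⬝ᵥ ξ = ψ₂ - (s - p) * (star s - star p) := by
    have h1 : star ξ ⬝ᵥ ξ = ((∑ i, Complex.normSq (ξ i) : ℝ) : ℂ) := by
      simp only [dotProduct, Pi.star_apply, Complex.star_def,
        ← Complex.normSq_eq_conj_mul_self]
      push_cast; rfl
    have h2 : ψ₂ = ((∑ i, Complex.normSq (ξ i) : ℝ) : ℂ) + (s - p) * (star s - star p) := by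
      show ((_ + Complex.normSq sxz : ℝ) : ℂ) = _
      push_cast
      rw [show ((Complex.normSq sxz : ℝ) : ℂ) = sxz * star sxz by
        rw [← Complex.mul_conj]; rfl, hsx, hsxs]
    rw [h1, h2]; ring
  have hxx' : ξ ⬝ᵥ star ξ = ψ₂ - (s - p) * (star s - star p) := by
    rw [dotProduct_comm]; exact hxx
  have hxz : ξ ⬝ᵥ z = p := rfl
  have hzx : z ⬝ᵥ ξ = p := by rw [dotProduct_comm]; exact hxz
  have hsxsz : star ξ ⬝ᵥ star z = star p := by
    simp only [dotProduct, Pi.star_apply, hp, star_sum]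
    exact Finset.sum_congr rfl fun k _ => by rw [star_mul']
  have hszsx : star z ⬝ᵥ star ξ = star p := by rw [dotProduct_comm]; exact hsxsz
  -- inverse of a22 (scaled form)
  have hq : (ψ₁ * ψ₁ : ℂ) ≠ 0 := mul_ne_zero hψ₁c hψ₁c
  set N0 : Matrix (Fin n) (Fin n) ℂ := ψ₁ • 1 - vecMulVec z (star z) with hN0
  have ha22N0 : a22 * N0 = (ψ₁ * ψ₁) • 1 := by
    show (ψ₁ • ((1 : Matrix (Fin n) (Fin n) ℂ) + vecMulVec z (star z))) * N0 = _
    rw [hN0]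
    simp only [Matrix.smul_mul, Matrix.mul_smul, Matrix.mul_sub, Matrix.mul_add,
      Matrix.add_mul, Matrix.sub_mul, Matrix.mul_one, Matrix.one_mul, vmv_mul,
      smul_smul, hzz, hzz', hxx, hxx', hxz, hzx, hsxsz, hszsx, smul_add, smul_sub]
    match_scalars <;> (try simp only [Complex.star_def]) <;> ring1
  have ha22N : a22 * ((ψ₁ * ψ₁)⁻¹ • N0) = 1 := by
    rw [Matrix.mul_smul, ha22N0, smul_smul, inv_mul_cancel₀ hq, one_smul]
  have ha22inv : a22⁻¹ = (ψ₁ * ψ₁)⁻¹ • N0 := Matrix.inv_eq_right_inv ha22N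
  -- scaled Schur complement
  set Sc0 : Matrix (Fin n) (Fin n) ℂ :=
    (ψ₁ * ψ₁ * ψ₂) • 1 - (s * ψ₁) • vecMulVec (star z) (star ξ)
      - (ψ₁ * ψ₂ - s * star s) • vecMulVec (star z) z
      + (ψ₁ * ψ₁) • vecMulVec ξ (star ξ)
      - (star s * ψ₁) • vecMulVec ξ z with hSc0
  have hscaled : (ψ₁ * ψ₁) • Sc = Sc0 := by
    show (ψ₁ * ψ₁) • (a11 - a12 * a22⁻¹ * a21) = Sc0
    rw [ha22inv, Matrix.mul_smul, Matrix.smul_mul, smul_sub, smul_smul,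
      mul_inv_cancel₀ hq, one_smul, hSc0, hN0]
    show (ψ₁ * ψ₁) • (ψ₂ • 1 - sxz • vecMulVec (star z) (star ξ) - star sxz • vecMulVec ξ z
        + ψ₁ • vecMulVec ξ (star ξ))
      - (ψ₁ • vecMulVec ξ (star z) + vecMulVec (star z) ξ
          - sxz • vecMulVec (star z) (star z)) * (ψ₁ • 1 - vecMulVec z (star z))
        * (ψ₁ • vecMulVec z (star ξ) + vecMulVec (star ξ) z
          - star sxz • vecMulVec z z) = _
    rw [hsx, hsxs]
    simp only [Matrix.smul_mul, Matrix.mul_smul, Matrix.mul_sub, Matrix.mul_add,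
      Matrix.add_mul, Matrix.sub_mul, Matrix.mul_one, Matrix.one_mul, vmv_mul,
      smul_smul, hzz, hzz', hxx, hxx', hxz, hzx, hsxsz, hszsx, smul_add, smul_sub]
    match_scalars <;> (try simp only [Complex.star_def]) <;> ring1
  have hScEq : Sc = (ψ₁ * ψ₁)⁻¹ • Sc0 := by
    rw [← hscaled, smul_smul, inv_mul_cancel₀ hq, one_smul]
  -- explicit inverse
  set d : ℂ := 2 * (ψ₁ * ψ₂) - s * star s with hd
  set M0 : Matrix (Fin n) (Fin n) ℂ :=
    d • 1 + (ψ₁ * (s - p)) • vecMulVec (star z) (star ξ)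
      + (d - ψ₁ * (s - p) * (star s - star p)) • vecMulVec (star z) z
      - ψ₁ • vecMulVec ξ (star ξ)
      + (ψ₁ * (star s - star p)) • vecMulVec ξ z with hM0
  have hqd : (ψ₂ * d : ℂ) ≠ 0 := mul_ne_zero hψ₂c hdc
  have hpoly : Sc0 * M0 = ((ψ₁ * ψ₁) * (ψ₂ * d)) • 1 := by
    rw [hSc0, hM0]
    simp only [Matrix.smul_mul, Matrix.mul_smul, Matrix.mul_sub, Matrix.mul_add,
      Matrix.add_mul, Matrix.sub_mul, Matrix.mul_one, Matrix.one_mul, vmv_mul,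
      smul_smul, hzz, hzz', hxx, hxx', hxz, hzx, hsxsz, hszsx, smul_add, smul_sub]
    match_scalars <;> (try simp only [hd, Complex.star_def]) <;> ring1
  set M : Matrix (Fin n) (Fin n) ℂ := (ψ₂ * d)⁻¹ • M0 with hM
  have hSM : Sc * M = 1 := by
    rw [hScEq, hM, Matrix.smul_mul, Matrix.mul_smul, hpoly, smul_smul, smul_smul]
    match_scalars
    field_simp
  have hUnit : IsUnit Sc := (Matrix.isUnit_iff_isUnit_det Sc).mpr
    (Matrix.isUnit_det_of_right_inverse hSM)
  have hScInv : Sc⁻¹ = M := Matrix.inv_eq_right_inv hSM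
  -- closed form of v (scaled)
  set w0 : Fin n → ℂ := (s * star s * ψ₁) • star z - (ψ₁ * ψ₁ * star s) • ξ with hw0
  have hvs : (ψ₁ * ψ₁) • v = w0 := by
    show (ψ₁ * ψ₁) • (b1 - (a12 * a22⁻¹) *ᵥ b2) = w0
    have hb1 : b1 = ψ₂ • star z - (ψ₁ * star sxz) • ξ := by
      funext i
      simp only [Pi.sub_apply, Pi.smul_apply, Pi.star_apply, smul_eq_mul]
      rfl
    have hb2 : b2 = ψ₁ • star ξ - (ψ₁ * star sxz) • z := by
      funext i
      simp only [Pi.sub_apply, Pi.smul_apply, Pi.star_apply, smul_eq_mul]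
      show ψ₁ * (star (ξ i) - star sxz * z i) = _
      ring
    rw [ha22inv, Matrix.mul_smul, Matrix.smul_mulVec, smul_sub, smul_smul,
      mul_inv_cancel₀ hq, one_smul, hb1, hb2, hN0, hsxs, hw0]
    show (ψ₁ * ψ₁) • (ψ₂ • star z - (ψ₁ * (star s - star p)) • ξ)
      - ((ψ₁ • vecMulVec ξ (star z) + vecMulVec (star z) ξ
          - sxz • vecMulVec (star z) (star z)) * (ψ₁ • 1 - vecMulVec z (star z))) *ᵥ
        (ψ₁ • star ξ - (ψ₁ * (star s - star p)) • z) = _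
    rw [hsx]
    simp only [Matrix.smul_mul, Matrix.mul_smul, Matrix.mul_sub, Matrix.mul_add,
      Matrix.add_mul, Matrix.sub_mul, Matrix.mul_one, Matrix.one_mul, vmv_mul,
      Matrix.add_mulVec, Matrix.sub_mulVec, Matrix.smul_mulVec, vmv_mulVec,
      Matrix.one_mulVec, dotProduct_smul, dotProduct_sub, dotProduct_add,
      smul_smul, smul_eq_mul, hzz, hzz', hxx, hxx', hxz, hzx, hsxsz, hszsx,
      smul_add, smul_sub]
    match_scalars <;> (try simp only [Complex.star_def]) <;> ring1
  have hv' : v = (ψ₁ * ψ₁)⁻¹ • w0 := by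
    rw [← hvs, smul_smul, inv_mul_cancel₀ hq, one_smul]
  refine ⟨hUnit, ?_⟩
  have hsψ₁ : star ψ₁ = ψ₁ := by
    show star ((ψ₁r : ℝ) : ℂ) = ((ψ₁r : ℝ) : ℂ)
    rw [Complex.star_def, Complex.conj_ofReal]
  have hsw0 : star w0 = (star s * s * ψ₁) • z - (ψ₁ * ψ₁ * s) • star ξ := by
    rw [hw0]
    funext i
    simp only [Pi.star_apply, Pi.sub_apply, Pi.smul_apply, smul_eq_mul, star_sub, star_mul',
      star_star, hsψ₁]
    try ring
  have hY : star w0 ⬝ᵥ (M0 *ᵥ w0) =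
      ψ₁ * ψ₁ * ψ₁ * ψ₁ * ψ₂ * (s * star s) * (ψ₁ * ψ₂ - s * star s) := by
    rw [hsw0, hw0, hM0]
    simp only [Matrix.add_mulVec, Matrix.sub_mulVec, Matrix.smul_mulVec, vmv_mulVec,
      Matrix.one_mulVec, Matrix.mulVec_smul, Matrix.mulVec_sub, Matrix.mulVec_add,
      dotProduct_smul, dotProduct_sub, dotProduct_add, smul_dotProduct, sub_dotProduct,
      add_dotProduct, smul_smul, smul_eq_mul,
      hzz, hzz', hxx, hxx', hxz, hzx, hsxsz, hszsx, smul_add, smul_sub]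
    simp only [hd, Complex.star_def]
    ring1
  rw [hScInv, hv', hM]
  have hstar : star ((ψ₁ * ψ₁)⁻¹ • w0) = (ψ₁ * ψ₁)⁻¹ • star w0 := by
    rw [star_smul, star_inv₀, star_mul', hsψ₁]
  rw [hstar]
  rw [Matrix.mulVec_smul, Matrix.smul_mulVec, dotProduct_smul, dotProduct_smul,
    smul_dotProduct, smul_eq_mul, smul_eq_mul, smul_eq_mul, hY, hτ₀e, hτe, ← hd]
  field_simp
end

section
/- Assume s ≠ 0. Then ( a₁₁ − a₁₂·a₂₂⁻¹·a₂₁ )⁻¹ = ψ₂⁻¹·( 1ₙ − (ψ₁/(2ψ₁ψ₂ − |s|²))·( ξᵀ·ξ̄ − conj(s_xz)·(ξᵀ·zᵀ) − s_xz·(z̄·ξ̄) + (m·ψ₁ − ‖ξ‖²)·(z̄·zᵀ) ) ), where m = ψ₁⁻²·(|s|² − ψ₁ψ₂). -/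
open Matrix Finset

lemma vmv_mul_vmv {n : ℕ} (u v w x : Fin n → ℂ) :
    Matrix.vecMulVec u v * Matrix.vecMulVec w x = (∑ i, v i * w i) • Matrix.vecMulVec u x := by
  ext i j
  simp only [Matrix.mul_apply, Matrix.vecMulVec_apply, Matrix.smul_apply, smul_eq_mul,
    Finset.sum_mul]
  exact Finset.sum_congr rfl fun k _ => by ring

lemma aux_key (n : ℕ) (s : ℂ) (hs : s ≠ 0) (z ξ : Fin n → ℂ) :
    Complex.normSq s <
      2 * ((∑ i, Complex.normSq (z i)) + 1) *
        ((∑ i, Complex.normSq (ξ i)) + Complex.normSq (s - ∑ i, ξ i * z i)) := by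
  set Z := ∑ i, Complex.normSq (z i) with hZ
  set X := ∑ i, Complex.normSq (ξ i) with hX
  set c := ∑ i, ξ i * z i with hc
  set w := ‖s - c‖ with hw
  set t := ‖c‖ with hts
  have hZ0 : 0 ≤ Z := Finset.sum_nonneg fun i _ => Complex.normSq_nonneg _
  have hX0 : 0 ≤ X := Finset.sum_nonneg fun i _ => Complex.normSq_nonneg _
  have hw0 : 0 ≤ w := norm_nonneg _
  have ht0 : 0 ≤ t := norm_nonneg _
  have hCS : t ^ 2 ≤ X * Z := by
    have h1 : t ≤ ∑ i, ‖ξ i‖ * ‖z i‖ := by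
      refine (norm_sum_le _ _).trans_eq ?_
      exact Finset.sum_congr rfl fun i _ => norm_mul _ _
    have h2 := Finset.sum_mul_sq_le_sq_mul_sq Finset.univ
      (fun i => ‖ξ i‖) (fun i => ‖z i‖)
    have h3 : t ^ 2 ≤ (∑ i, ‖ξ i‖ * ‖z i‖) ^ 2 :=
      pow_le_pow_left₀ ht0 h1 2
    refine h3.trans (h2.trans_eq ?_)
    simp [Complex.sq_norm, hX, hZ]
  have hst : ‖s‖ ≤ w + t := by
    calc ‖s‖ = ‖(s - c) + c‖ := by ring_nf
    _ ≤ w + t := norm_add_le _ _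
  have habs : Complex.normSq s = ‖s‖ ^ 2 := (Complex.sq_norm s).symm
  have hnsq : Complex.normSq (s - c) = w ^ 2 := (Complex.sq_norm _).symm
  have hXw : 0 < X + w ^ 2 := by
    rcases lt_or_eq_of_le (by positivity : (0:ℝ) ≤ X + w ^ 2) with h | h
    · exact h
    · exfalso
      have hX' : X = 0 := by nlinarith [sq_nonneg w]
      have hw' : w = 0 := by nlinarith [sq_nonneg w]
      have ht' : t = 0 := by nlinarith
      have : ‖s‖ = 0 := le_antisymm (by rw [hw', ht'] at hst; linarith) (norm_nonneg _)
      exact hs (by simpa using this)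
  have hsqX : Real.sqrt X ^ 2 = X := Real.sq_sqrt hX0
  have hsqZ : Real.sqrt Z ^ 2 = Z := Real.sq_sqrt hZ0
  have hts' : t ≤ Real.sqrt X * Real.sqrt Z := by
    rw [← Real.sqrt_mul hX0]
    have := Real.sqrt_le_sqrt hCS
    rwa [Real.sqrt_sq ht0] at this
  have h2wt : 2 * w * t ≤ X + Z * w ^ 2 := by
    nlinarith [sq_nonneg (Real.sqrt X - w * Real.sqrt Z),
      mul_le_mul_of_nonneg_left hts' (by linarith : (0:ℝ) ≤ 2 * w)]
  rw [habs, hnsq]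
  nlinarith [mul_self_nonneg ‖s‖, hst, mul_le_mul hst hst (norm_nonneg s) (by linarith)]

set_option maxHeartbeats 8000000 in
theorem stmt_17 (n : ℕ) (hn : 1 ≤ n) (s : ℂ) (hs : s ≠ 0) (z ξ : Fin n → ℂ) :
    let sxz : ℂ := s - ∑ i, ξ i * z i
    let ψ₁r : ℝ := (∑ i, Complex.normSq (z i)) + 1
    let ψ₂r : ℝ := (∑ i, Complex.normSq (ξ i)) + Complex.normSq sxz
    let τr : ℝ := ψ₁r * ψ₂r
    let τ₀r : ℝ := Complex.normSq s
    let ψ₁ : ℂ := (ψ₁r : ℂ)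
    let ψ₂ : ℂ := (ψ₂r : ℂ)
    let τ : ℂ := (τr : ℂ)
    let τ₀ : ℂ := (τ₀r : ℂ)
    let a11 : Matrix (Fin n) (Fin n) ℂ :=
      ψ₂ • 1 - sxz • Matrix.vecMulVec (star z) (star ξ)
        - star sxz • Matrix.vecMulVec ξ z + ψ₁ • Matrix.vecMulVec ξ (star ξ)
    let a12 : Matrix (Fin n) (Fin n) ℂ :=
      ψ₁ • Matrix.vecMulVec ξ (star z) + Matrix.vecMulVec (star z) ξ
        - sxz • Matrix.vecMulVec (star z) (star z)
    let a21 : Matrix (Fin n) (Fin n) ℂ :=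
      ψ₁ • Matrix.vecMulVec z (star ξ) + Matrix.vecMulVec (star ξ) z
        - star sxz • Matrix.vecMulVec z z
    let a22 : Matrix (Fin n) (Fin n) ℂ := ψ₁ • (1 + Matrix.vecMulVec z (star z))
    let A' : Matrix (Fin n ⊕ Fin n) (Fin n ⊕ Fin n) ℂ := Matrix.fromBlocks a11 a12 a21 a22
    let b : Fin n ⊕ Fin n → ℂ :=
      Sum.elim (fun i => ψ₂ * star (z i) - ψ₁ * star sxz * ξ i)
               (fun i => ψ₁ * (star (ξ i) - star sxz * z i))
    let m : ℂ := ψ₁⁻¹ ^ 2 * (τ₀ - ψ₁ * ψ₂)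
    let ξn : ℂ := ((∑ i, Complex.normSq (ξ i) : ℝ) : ℂ)
    (a11 - a12 * a22⁻¹ * a21)⁻¹
      = ψ₂⁻¹ • ((1 : Matrix (Fin n) (Fin n) ℂ)
          - (ψ₁ / (2 * ψ₁ * ψ₂ - τ₀)) •
              (Matrix.vecMulVec ξ (star ξ) - star sxz • Matrix.vecMulVec ξ z
                - sxz • Matrix.vecMulVec (star z) (star ξ)
                + (m * ψ₁ - ξn) • Matrix.vecMulVec (star z) z)) := by
  intro sxz ψ₁r ψ₂r τr τ₀r ψ₁ ψ₂ τ τ₀ a11 a12 a21 a22 A' b m ξn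
  have hZnn : (0:ℝ) ≤ ∑ i, Complex.normSq (z i) :=
    Finset.sum_nonneg fun i _ => Complex.normSq_nonneg _
  have hψ₁r : (1:ℝ) ≤ ψ₁r := by simp only [ψ₁r]; linarith
  have hkey : τ₀r < 2 * ψ₁r * ψ₂r := aux_key n s hs z ξ
  have hτ₀r : 0 < τ₀r := Complex.normSq_pos.2 hs
  have hψ₂r : 0 < ψ₂r := by nlinarith
  have hψ₁0 : ψ₁ ≠ 0 := Complex.ofReal_ne_zero.2 (by linarith)
  have hψ₂0 : ψ₂ ≠ 0 := Complex.ofReal_ne_zero.2 (ne_of_gt hψ₂r)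
  have hD0 : 2 * ψ₁ * ψ₂ - τ₀ ≠ 0 := by
    have h : ((2 * ψ₁r * ψ₂r - τ₀r : ℝ) : ℂ) ≠ 0 :=
      Complex.ofReal_ne_zero.2 (by linarith)
    simp only [ψ₁, ψ₂, τ₀] at *
    push_cast at h
    convert h using 1
  have hmc : ∀ w : ℂ, w * star w = ((Complex.normSq w : ℝ) : ℂ) := fun w => by
    rw [Complex.star_def, Complex.mul_conj]
  have hmc' : ∀ w : ℂ, star w * w = ((Complex.normSq w : ℝ) : ℂ) := fun w => by
    rw [mul_comm]; exact hmc w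
  have hzz : (∑ i, star (z i) * z i) = ψ₁ - 1 := by
    simp only [hmc', ψ₁, ψ₁r]; push_cast; ring
  have hzz' : (∑ i, z i * star (z i)) = ψ₁ - 1 := by
    simp only [hmc, ψ₁, ψ₁r]; push_cast; ring
  have hxx : (∑ i, ξ i * star (ξ i)) = ξn := by
    simp only [hmc, ξn]; push_cast; ring
  have hxx' : (∑ i, star (ξ i) * ξ i) = ξn := by
    simp only [hmc', ξn]; push_cast; ring
  have hc1 : (∑ i, ξ i * z i) = s - sxz := by simp only [sxz]; ring
  have hc2 : (∑ i, z i * ξ i) = s - sxz := by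
    rw [← hc1]; exact Finset.sum_congr rfl fun i _ => mul_comm _ _
  have hcb1 : (∑ i, star (z i) * star (ξ i)) = star s - star sxz := by
    have h : (∑ i, star (z i) * star (ξ i)) = star (∑ i, ξ i * z i) := by
      rw [star_sum]; exact Finset.sum_congr rfl fun i _ => (StarMul.star_mul _ _).symm
    rw [h, hc1, star_sub]
  have hcb2 : (∑ i, star (ξ i) * star (z i)) = star s - star sxz := by
    rw [← hcb1]; exact Finset.sum_congr rfl fun i _ => mul_comm _ _
  have hψ₂e : ψ₂ = ξn + sxz * star sxz := by
    simp only [ψ₂, ψ₂r, ξn]; push_cast; rw [hmc sxz]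
  have hξn : ξn = ψ₂ - sxz * star sxz := by rw [hψ₂e]; ring
  have hτ₀e : τ₀ = s * star s := by
    simp only [τ₀, τ₀r]; exact (hmc s).symm
  -- inverse-free building blocks
  have hψψ : ψ₁ * ψ₁ ≠ 0 := mul_ne_zero hψ₁0 hψ₁0
  have hψD : ψ₂ * (2 * ψ₁ * ψ₂ - τ₀) ≠ 0 := mul_ne_zero hψ₂0 hD0
  have ha22M : a22 * (ψ₁ • (1 : Matrix (Fin n) (Fin n) ℂ) - Matrix.vecMulVec z (star z))
      = (ψ₁ * ψ₁) • (1 : Matrix (Fin n) (Fin n) ℂ) := by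
    simp only [a22, mul_sub, sub_mul, mul_add, add_mul, smul_mul_assoc, mul_smul_comm,
      smul_smul, one_mul, mul_one, Matrix.one_mul, Matrix.mul_one, vmv_mul_vmv,
      Pi.star_apply, hzz, smul_sub, smul_add]
    match_scalars <;> ring
  have ha22 : a22⁻¹ = (ψ₁ * ψ₁)⁻¹ •
      (ψ₁ • (1 : Matrix (Fin n) (Fin n) ℂ) - Matrix.vecMulVec z (star z)) := by
    apply Matrix.inv_eq_right_inv
    rw [Matrix.mul_smul, ha22M, smul_smul, inv_mul_cancel₀ hψψ, one_smul]
  set N : Matrix (Fin n) (Fin n) ℂ :=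
    (2 * ψ₁ * ψ₂ - τ₀) • (1 : Matrix (Fin n) (Fin n) ℂ)
      - (ψ₁ • Matrix.vecMulVec ξ (star ξ) - (ψ₁ * star sxz) • Matrix.vecMulVec ξ z
          - (ψ₁ * sxz) • Matrix.vecMulVec (star z) (star ξ)
          + (τ₀ - ψ₁ * ψ₂ - ψ₁ * ξn) • Matrix.vecMulVec (star z) z) with hN
  have hRHS : ψ₂⁻¹ • ((1 : Matrix (Fin n) (Fin n) ℂ)
          - (ψ₁ / (2 * ψ₁ * ψ₂ - τ₀)) •
              (Matrix.vecMulVec ξ (star ξ) - star sxz • Matrix.vecMulVec ξ z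
                - sxz • Matrix.vecMulVec (star z) (star ξ)
                + (m * ψ₁ - ξn) • Matrix.vecMulVec (star z) z))
      = (ψ₂ * (2 * ψ₁ * ψ₂ - τ₀))⁻¹ • N := by
    rw [hN]
    simp only [m]
    match_scalars <;> field_simp <;> exact (div_self (by intro h; apply hD0; linear_combination h)).symm
  rw [ha22]
  apply Matrix.inv_eq_right_inv
  rw [hRHS]
  have hT : a12 * ((ψ₁ * ψ₁)⁻¹ •
      (ψ₁ • (1 : Matrix (Fin n) (Fin n) ℂ) - Matrix.vecMulVec z (star z))) * a21
      = (ψ₁ * ψ₁)⁻¹ • (a12 * (ψ₁ • (1 : Matrix (Fin n) (Fin n) ℂ)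
          - Matrix.vecMulVec z (star z)) * a21) := by
    rw [Matrix.mul_smul, Matrix.smul_mul]
  rw [hT]
  have hKey : a12 * (ψ₁ • (1 : Matrix (Fin n) (Fin n) ℂ)
        - Matrix.vecMulVec z (star z)) * a21 * N
      = (ψ₁ * ψ₁) • (a11 * N)
        - ((ψ₁ * ψ₁) * (ψ₂ * (2 * ψ₁ * ψ₂ - τ₀))) • (1 : Matrix (Fin n) (Fin n) ℂ) := by
    rw [hN]
    simp only [a11, a12, a21, mul_sub, sub_mul, mul_add, add_mul, smul_mul_assoc,
      mul_smul_comm, smul_smul, one_mul, mul_one, Matrix.one_mul, Matrix.mul_one,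
      vmv_mul_vmv, Pi.star_apply, hzz, hzz', hxx, hxx', hc1, hc2, hcb1, hcb2,
      smul_sub, smul_add]
    rw [hτ₀e, hξn]
    match_scalars <;> ring
  rw [Matrix.sub_mul, Matrix.smul_mul, mul_smul_comm, mul_smul_comm, hKey]
  rw [smul_sub, smul_smul, smul_smul, smul_sub, smul_smul, smul_smul]
  match_scalars <;> field_simp <;> (rw [div_eq_iff]; ring; intro h; apply hD0; linear_combination h)
end
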